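/- Let Ω ⊂ ℝⁿ be a smoothly bounded domain and φ ∈ C²(closure Ω) with φ > 0 on closure Ω and ∂φ/∂ν = 0 on ∂Ω. If ∫_Ω (|∇φ|⁴/φ³) ≤ (2+√n)² ∫_Ω φ|D² ln φ|², then ∫_Ω (|D²φ|²/φ) ≤ (2n + 8√n + 10) ∫_Ω φ|D² ln φ|². -/

import Mathlib

open MeasureTheory Set

section Aux

variable {E : Type*} [NormedAddCommGroup E] [NormedSpace ℝ E]


open MeasureTheory Set

variable {E : Type*} [NormedAddCommGroup E] [NormedSpace ℝ E]

/-- Local-to-global boundedness of first and second derivatives on an open set with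
compact closure, given `C²` regularity on the closure. -/
lemma bound_derivs {f : E → ℝ} {s : Set E} (hs : IsOpen s) (hcomp : IsCompact (closure s))
    (hf : ContDiffOn ℝ 2 f (closure s)) :
    ∃ C : ℝ, ∀ y ∈ s, ‖fderiv ℝ f y‖ ≤ C ∧ ‖iteratedFDeriv ℝ 2 f y‖ ≤ C := by
  have hloc : ∀ x ∈ closure s, ∃ U : Set E, U ∈ nhds x ∧ ∃ C : ℝ,
      ∀ y ∈ U ∩ s, ‖fderiv ℝ f y‖ ≤ C ∧ ‖iteratedFDeriv ℝ 2 f y‖ ≤ C := by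
    intro x hx
    have h2 : ContDiffWithinAt ℝ ((2 : ℕ) : WithTop ℕ∞) f (closure s) x := by
      exact_mod_cast hf x hx
    obtain ⟨u, hu, p, hp⟩ := contDiffWithinAt_nat.mp h2
    rw [insert_eq_self.mpr hx] at hu
    have hxu : x ∈ u := mem_of_mem_nhdsWithin hx hu
    have hcont1 : ContinuousWithinAt (fun y => ‖p y 1‖) u x :=
      ((hp.cont 1 (by exact_mod_cast one_le_two)) x hxu).norm
    have hcont2 : ContinuousWithinAt (fun y => ‖p y 2‖) u x :=
      ((hp.cont 2 le_rfl) x hxu).norm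
    have hev1 : ∀ᶠ y in nhdsWithin x u, ‖p y 1‖ ≤ ‖p x 1‖ + 1 :=
      (hcont1.eventually_lt_const (lt_add_one _)).mono fun y hy => hy.le
    have hev2 : ∀ᶠ y in nhdsWithin x u, ‖p y 2‖ ≤ ‖p x 2‖ + 1 :=
      (hcont2.eventually_lt_const (lt_add_one _)).mono fun y hy => hy.le
    obtain ⟨v, hvopen, hxv, hvsub⟩ := mem_nhdsWithin.mp hu
    obtain ⟨w, hwopen, hxw, hwsub⟩ := mem_nhdsWithin.mp ((hev1.and hev2) : _)
    refine ⟨v ∩ w, (hvopen.inter hwopen).mem_nhds ⟨hxv, hxw⟩,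
      max (‖p x 1‖ + 1) (‖p x 2‖ + 1), ?_⟩
    intro y hy
    set o : Set E := (v ∩ w) ∩ s with ho
    have hoopen : IsOpen o := (hvopen.inter hwopen).inter hs
    have hyo : y ∈ o := hy
    have hosub : o ⊆ u := fun z hz => hvsub ⟨hz.1.1, subset_closure hz.2⟩
    have hyu : y ∈ u := hosub hyo
    have hybd : ‖p y 1‖ ≤ ‖p x 1‖ + 1 ∧ ‖p y 2‖ ≤ ‖p x 2‖ + 1 :=
      hwsub ⟨hy.1.2, hyu⟩
    have hp' : HasFTaylorSeriesUpToOn ((2 : ℕ) : WithTop ℕ∞) f p o := hp.mono hosub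
    constructor
    · have hfd : HasFDerivAt f (continuousMultilinearCurryFin1 ℝ E ℝ (p y 1)) y :=
        (hp'.hasFDerivWithinAt (by simp) hyo).hasFDerivAt
          (hoopen.mem_nhds hyo)
      rw [hfd.fderiv]
      calc ‖continuousMultilinearCurryFin1 ℝ E ℝ (p y 1)‖ = ‖p y 1‖ :=
            LinearIsometryEquiv.norm_map _ _
        _ ≤ ‖p x 1‖ + 1 := hybd.1
        _ ≤ _ := le_max_left _ _
    · have heq : p y 2 = iteratedFDeriv ℝ 2 f y := by
        rw [hp'.eq_iteratedFDerivWithin_of_uniqueDiffOn (by exact_mod_cast le_rfl)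
          hoopen.uniqueDiffOn hyo, iteratedFDerivWithin_of_isOpen 2 hoopen hyo]
      rw [← heq]
      exact hybd.2.trans (le_max_right _ _)
  choose U hU C hC using hloc
  obtain ⟨t, ht⟩ := hcomp.elim_nhds_subcover' (fun x hx => U x hx) (fun x hx => hU x hx)
  rcases t.eq_empty_or_nonempty with hte | hte
  · refine ⟨0, fun y hy => absurd (ht (subset_closure hy)) ?_⟩
    simp [hte]
  · refine ⟨t.sup' hte (fun z : closure s => C z z.2), fun y hy => ?_⟩
    have := ht (subset_closure hy)
    simp only [Set.mem_iUnion] at this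
    obtain ⟨z, hz, hyU⟩ := this
    obtain ⟨h1, h2⟩ := hC z z.2 y ⟨hyU, hy⟩
    exact ⟨h1.trans (Finset.le_sup' (fun z : closure s => C z z.2) hz),
      h2.trans (Finset.le_sup' (fun z : closure s => C z z.2) hz)⟩

variable {E : Type*} [NormedAddCommGroup E] [NormedSpace ℝ E]

lemma log_second_deriv {f : E → ℝ} {s : Set E} (hs : IsOpen s)
    (hf : ContDiffOn ℝ 2 f s) (hpos : ∀ x ∈ s, 0 < f x) {x : E} (hx : x ∈ s) (v w : E) :
    iteratedFDeriv ℝ 2 (fun y => Real.log (f y)) x ![v, w] =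
      (f x)⁻¹ * (iteratedFDeriv ℝ 2 f x ![v, w]) -
        (f x ^ 2)⁻¹ * (fderiv ℝ f x v * fderiv ℝ f x w) := by
  have hfx : f x ≠ 0 := (hpos x hx).ne'
  have hat : ContDiffAt ℝ 2 f x := hf.contDiffAt (hs.mem_nhds hx)
  have hd1 : DifferentiableAt ℝ f x := hat.differentiableAt (by norm_num)
  have hd2 : DifferentiableAt ℝ (fderiv ℝ f) x :=
    (hat.fderiv_right (m := 1) (by norm_num)).differentiableAt one_ne_zero
  have hloc : (fderiv ℝ fun y => Real.log (f y)) =ᶠ[nhds x]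
      fun y => (f y)⁻¹ • fderiv ℝ f y := by
    filter_upwards [hs.mem_nhds hx] with y hy
    exact (((hf.contDiffAt (hs.mem_nhds hy)).differentiableAt
      (by norm_num)).hasFDerivAt.log (hpos y hy).ne').fderiv
  have hinv : HasFDerivAt (fun y => (f y)⁻¹) ((-(f x ^ 2)⁻¹) • fderiv ℝ f x) x := by
    have h := (hasDerivAt_inv hfx).comp_hasFDerivAt x hd1.hasFDerivAt
    exact h
  have hD : HasFDerivAt (fun y => (f y)⁻¹ • fderiv ℝ f y)
      ((f x)⁻¹ • (fderiv ℝ (fderiv ℝ f) x) +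
        (((-(f x ^ 2)⁻¹) • fderiv ℝ f x).smulRight (fderiv ℝ f x))) x :=
    hinv.smul hd2.hasFDerivAt
  rw [iteratedFDeriv_two_apply, iteratedFDeriv_two_apply]
  rw [hloc.fderiv_eq, hD.fderiv]
  simp only [Matrix.cons_val_zero, Matrix.cons_val_one, Matrix.head_cons,
    ContinuousLinearMap.add_apply, ContinuousLinearMap.smul_apply,
    ContinuousLinearMap.smulRight_apply, smul_eq_mul, neg_mul]
  ring


lemma entry_ineq {t a b : ℝ} (ht : 0 < t) :
    a ^ 2 / t ≤ 2 * (t * ((t⁻¹ * a - (t ^ 2)⁻¹ * b) ^ 2)) + 2 * (b ^ 2 / t ^ 3) := by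
  have ht' := ht.ne'
  have key : 2 * (t * ((t⁻¹ * a - (t ^ 2)⁻¹ * b) ^ 2)) + 2 * (b ^ 2 / t ^ 3) - a ^ 2 / t
      = t * (t⁻¹ * a - 2 * ((t ^ 2)⁻¹ * b)) ^ 2 := by
    field_simp
    ring
  nlinarith [mul_nonneg ht.le (sq_nonneg (t⁻¹ * a - 2 * ((t ^ 2)⁻¹ * b)))]

end Aux

/-- for a smoothly bounded domain `Ω ⊆ ℝⁿ` and a positive `C²` function `φ`
on `closure Ω` with vanishing normal derivative on `∂Ω`, if
`∫_Ω |∇φ|⁴/φ³ ≤ (2+√n)² ∫_Ω φ |D² ln φ|²`, then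
`∫_Ω |D²φ|²/φ ≤ (2n+8√n+10) ∫_Ω φ |D² ln φ|²`.
Here `∂_i ψ x = (fderiv ψ x)(e_i)`, the Hessian entries are
`(iteratedFDeriv 2 ψ x)(e_i, e_j)`, `|∇φ|` is the Euclidean norm of the gradient and
`|D²ψ|` the Frobenius norm of the Hessian. -/
theorem stmt_2 (n : ℕ) (hn : 1 ≤ n) (Ω : Set (EuclideanSpace ℝ (Fin n)))
    (hΩopen : IsOpen Ω) (hΩbdd : Bornology.IsBounded Ω) (hΩne : Ω.Nonempty)
    (ν : EuclideanSpace ℝ (Fin n) → EuclideanSpace ℝ (Fin n))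
    (φ : EuclideanSpace ℝ (Fin n) → ℝ)
    (hφC2 : ContDiffOn ℝ 2 φ (closure Ω))
    (hφpos : ∀ x ∈ closure Ω, 0 < φ x)
    (hν : ∀ x ∈ frontier Ω, fderiv ℝ φ x (ν x) = 0)
    (hyp :
      (∫ x in Ω,
          (∑ i : Fin n, (fderiv ℝ φ x (EuclideanSpace.single i 1)) ^ 2) ^ 2 / φ x ^ 3)
        ≤ (2 + Real.sqrt n) ^ 2 *
          ∫ x in Ω, φ x *
            (∑ i : Fin n, ∑ j : Fin n,
              (iteratedFDeriv ℝ 2 (fun y => Real.log (φ y)) x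
                ![EuclideanSpace.single i 1, EuclideanSpace.single j 1]) ^ 2)) :
    (∫ x in Ω,
        (∑ i : Fin n, ∑ j : Fin n,
          (iteratedFDeriv ℝ 2 φ x
            ![EuclideanSpace.single i 1, EuclideanSpace.single j 1]) ^ 2) / φ x)
      ≤ (2 * n + 8 * Real.sqrt n + 10) *
        ∫ x in Ω, φ x *
          (∑ i : Fin n, ∑ j : Fin n,
            (iteratedFDeriv ℝ 2 (fun y => Real.log (φ y)) x
              ![EuclideanSpace.single i 1, EuclideanSpace.single j 1]) ^ 2) := by
  classical
  set e : Fin n → EuclideanSpace ℝ (Fin n) := fun i => EuclideanSpace.single i 1 with he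
  set ψ : EuclideanSpace ℝ (Fin n) → ℝ := fun y => Real.log (φ y) with hψ
  set F : EuclideanSpace ℝ (Fin n) → ℝ := fun x =>
    (∑ i : Fin n, ∑ j : Fin n, (iteratedFDeriv ℝ 2 φ x ![e i, e j]) ^ 2) / φ x with hF
  set J : EuclideanSpace ℝ (Fin n) → ℝ := fun x =>
    φ x * (∑ i : Fin n, ∑ j : Fin n, (iteratedFDeriv ℝ 2 ψ x ![e i, e j]) ^ 2) with hJ
  set G : EuclideanSpace ℝ (Fin n) → ℝ := fun x =>
    (∑ i : Fin n, (fderiv ℝ φ x (e i)) ^ 2) ^ 2 / φ x ^ 3 with hG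
  -- basic facts
  have hsubc : Ω ⊆ closure Ω := subset_closure
  have hposΩ : ∀ x ∈ Ω, 0 < φ x := fun x hx => hφpos x (hsubc hx)
  have hψC2 : ContDiffOn ℝ 2 ψ (closure Ω) := hφC2.log fun x hx => (hφpos x hx).ne'
  have hcomp : IsCompact (closure Ω) := hΩbdd.isCompact_closure
  have hmeas : MeasurableSet Ω := hΩopen.measurableSet
  have hfin : volume Ω < ⊤ :=
    lt_of_le_of_lt (measure_mono hsubc) hcomp.measure_lt_top
  -- bounds on derivatives
  obtain ⟨C1, hC1⟩ := bound_derivs hΩopen hcomp hφC2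
  obtain ⟨C2, hC2⟩ := bound_derivs hΩopen hcomp hψC2
  set D1 : ℝ := max C1 0 with hD1
  set D2 : ℝ := max C2 0 with hD2
  have hD1nn : 0 ≤ D1 := le_max_right _ _
  have hD2nn : 0 ≤ D2 := le_max_right _ _
  -- min and max of φ
  obtain ⟨zm, hzm, hzmin⟩ := hcomp.exists_isMinOn hΩne.closure hφC2.continuousOn
  obtain ⟨zM, hzM, hzmax⟩ := hcomp.exists_isMaxOn hΩne.closure hφC2.continuousOn
  set δ : ℝ := φ zm with hδdef
  set M : ℝ := φ zM with hMdef
  have hδ : 0 < δ := hφpos zm hzm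
  have hδle : ∀ x ∈ Ω, δ ≤ φ x := fun x hx => hzmin (hsubc hx)
  have hMle : ∀ x ∈ Ω, φ x ≤ M := fun x hx => hzmax (hsubc hx)
  have hMpos : 0 < M := lt_of_lt_of_le hδ (hzmin hzM)
  -- norm of the pair of basis vectors
  have hprod : ∀ i j : Fin n,
      (∏ k : Fin 2, ‖(![e i, e j] : Fin 2 → EuclideanSpace ℝ (Fin n)) k‖) = 1 := by
    intro i j
    simp [Fin.prod_univ_two, he, EuclideanSpace.norm_single, norm_one]
  -- entry bounds
  have hentryφ : ∀ x ∈ Ω, ∀ i j : Fin n, |iteratedFDeriv ℝ 2 φ x ![e i, e j]| ≤ D1 := by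
    intro x hx i j
    calc |iteratedFDeriv ℝ 2 φ x ![e i, e j]| = ‖iteratedFDeriv ℝ 2 φ x ![e i, e j]‖ := rfl
      _ ≤ ‖iteratedFDeriv ℝ 2 φ x‖ * ∏ k : Fin 2, ‖(![e i, e j] : Fin 2 → EuclideanSpace ℝ (Fin n)) k‖ :=
          (iteratedFDeriv ℝ 2 φ x).le_opNorm _
      _ = ‖iteratedFDeriv ℝ 2 φ x‖ := by rw [hprod i j, mul_one]
      _ ≤ C1 := (hC1 x hx).2
      _ ≤ D1 := le_max_left _ _
  have hentryψ : ∀ x ∈ Ω, ∀ i j : Fin n, |iteratedFDeriv ℝ 2 ψ x ![e i, e j]| ≤ D2 := by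
    intro x hx i j
    calc |iteratedFDeriv ℝ 2 ψ x ![e i, e j]| = ‖iteratedFDeriv ℝ 2 ψ x ![e i, e j]‖ := rfl
      _ ≤ ‖iteratedFDeriv ℝ 2 ψ x‖ * ∏ k : Fin 2, ‖(![e i, e j] : Fin 2 → EuclideanSpace ℝ (Fin n)) k‖ :=
          (iteratedFDeriv ℝ 2 ψ x).le_opNorm _
      _ = ‖iteratedFDeriv ℝ 2 ψ x‖ := by rw [hprod i j, mul_one]
      _ ≤ C2 := (hC2 x hx).2
      _ ≤ D2 := le_max_left _ _
  have hgradφ : ∀ x ∈ Ω, ∀ i : Fin n, |fderiv ℝ φ x (e i)| ≤ D1 := by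
    intro x hx i
    calc |fderiv ℝ φ x (e i)| = ‖fderiv ℝ φ x (e i)‖ := rfl
      _ ≤ ‖fderiv ℝ φ x‖ * ‖e i‖ := (fderiv ℝ φ x).le_opNorm _
      _ = ‖fderiv ℝ φ x‖ := by simp [he, EuclideanSpace.norm_single, norm_one]
      _ ≤ C1 := (hC1 x hx).1
      _ ≤ D1 := le_max_left _ _
  -- sum-of-squares bounds
  have hsumφ : ∀ x ∈ Ω,
      (∑ i : Fin n, ∑ j : Fin n, (iteratedFDeriv ℝ 2 φ x ![e i, e j]) ^ 2)
        ≤ (n : ℝ) ^ 2 * D1 ^ 2 := by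
    intro x hx
    calc (∑ i : Fin n, ∑ j : Fin n, (iteratedFDeriv ℝ 2 φ x ![e i, e j]) ^ 2)
        ≤ ∑ _i : Fin n, ∑ _j : Fin n, D1 ^ 2 := by
          refine Finset.sum_le_sum fun i _ => Finset.sum_le_sum fun j _ => ?_
          rw [← sq_abs]
          exact pow_le_pow_left₀ (abs_nonneg _) (hentryφ x hx i j) 2
      _ = (n : ℝ) ^ 2 * D1 ^ 2 := by simp [Finset.sum_const]; ring
  have hsumψ : ∀ x ∈ Ω,
      (∑ i : Fin n, ∑ j : Fin n, (iteratedFDeriv ℝ 2 ψ x ![e i, e j]) ^ 2)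
        ≤ (n : ℝ) ^ 2 * D2 ^ 2 := by
    intro x hx
    calc (∑ i : Fin n, ∑ j : Fin n, (iteratedFDeriv ℝ 2 ψ x ![e i, e j]) ^ 2)
        ≤ ∑ _i : Fin n, ∑ _j : Fin n, D2 ^ 2 := by
          refine Finset.sum_le_sum fun i _ => Finset.sum_le_sum fun j _ => ?_
          rw [← sq_abs]
          exact pow_le_pow_left₀ (abs_nonneg _) (hentryψ x hx i j) 2
      _ = (n : ℝ) ^ 2 * D2 ^ 2 := by simp [Finset.sum_const]; ring
  have hsumgrad : ∀ x ∈ Ω,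
      (∑ i : Fin n, (fderiv ℝ φ x (e i)) ^ 2) ≤ (n : ℝ) * D1 ^ 2 := by
    intro x hx
    calc (∑ i : Fin n, (fderiv ℝ φ x (e i)) ^ 2) ≤ ∑ _i : Fin n, D1 ^ 2 := by
          refine Finset.sum_le_sum fun i _ => ?_
          rw [← sq_abs]
          exact pow_le_pow_left₀ (abs_nonneg _) (hgradφ x hx i) 2
      _ = (n : ℝ) * D1 ^ 2 := by simp [Finset.sum_const]
  -- nonnegativity of sums of squares
  have hsumφnn : ∀ x : EuclideanSpace ℝ (Fin n), 0 ≤ ∑ i : Fin n, ∑ j : Fin n, (iteratedFDeriv ℝ 2 φ x ![e i, e j]) ^ 2 :=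
    fun x => Finset.sum_nonneg fun i _ => Finset.sum_nonneg fun j _ => sq_nonneg _
  have hsumψnn : ∀ x : EuclideanSpace ℝ (Fin n), 0 ≤ ∑ i : Fin n, ∑ j : Fin n, (iteratedFDeriv ℝ 2 ψ x ![e i, e j]) ^ 2 :=
    fun x => Finset.sum_nonneg fun i _ => Finset.sum_nonneg fun j _ => sq_nonneg _
  have hsumgnn : ∀ x : EuclideanSpace ℝ (Fin n), 0 ≤ ∑ i : Fin n, (fderiv ℝ φ x (e i)) ^ 2 :=
    fun x => Finset.sum_nonneg fun i _ => sq_nonneg _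
  -- continuity on Ω
  have hcφ : ContinuousOn φ Ω := hφC2.continuousOn.mono hsubc
  have hcdφ : ContinuousOn (fderiv ℝ φ) Ω :=
    (hφC2.mono hsubc).continuousOn_fderiv_of_isOpen hΩopen one_le_two
  have hciφ : ContinuousOn (iteratedFDeriv ℝ 2 φ) Ω := by
    have h := (hφC2.mono hsubc).continuousOn_iteratedFDerivWithin (m := 2)
      (by exact_mod_cast le_rfl) hΩopen.uniqueDiffOn
    exact h.congr fun y hy => (iteratedFDerivWithin_of_isOpen 2 hΩopen hy).symm
  have hciψ : ContinuousOn (iteratedFDeriv ℝ 2 ψ) Ω := by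
    have h := (hψC2.mono hsubc).continuousOn_iteratedFDerivWithin (m := 2)
      (by exact_mod_cast le_rfl) hΩopen.uniqueDiffOn
    exact h.congr fun y hy => (iteratedFDerivWithin_of_isOpen 2 hΩopen hy).symm
  have hcφne : ∀ x ∈ Ω, φ x ≠ 0 := fun x hx => (hposΩ x hx).ne'
  have hcentryφ : ∀ i j : Fin n,
      ContinuousOn (fun x => iteratedFDeriv ℝ 2 φ x ![e i, e j]) Ω := fun i j =>
    (ContinuousMultilinearMap.apply ℝ (fun _ : Fin 2 => EuclideanSpace ℝ (Fin n)) ℝ ![e i, e j]).continuous.comp_continuousOn hciφ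
  have hcentryψ : ∀ i j : Fin n,
      ContinuousOn (fun x => iteratedFDeriv ℝ 2 ψ x ![e i, e j]) Ω := fun i j =>
    (ContinuousMultilinearMap.apply ℝ (fun _ : Fin 2 => EuclideanSpace ℝ (Fin n)) ℝ ![e i, e j]).continuous.comp_continuousOn hciψ
  have hcgrad : ∀ i : Fin n, ContinuousOn (fun x => fderiv ℝ φ x (e i)) Ω := fun i =>
    (ContinuousLinearMap.apply ℝ ℝ (e i)).continuous.comp_continuousOn hcdφ
  have hcF : ContinuousOn F Ω := by
    refine ContinuousOn.div ?_ hcφ hcφne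
    exact continuousOn_finset_sum _ fun i _ =>
      continuousOn_finset_sum _ fun j _ => (hcentryφ i j).pow 2
  have hcJ : ContinuousOn J Ω := by
    refine hcφ.mul ?_
    exact continuousOn_finset_sum _ fun i _ =>
      continuousOn_finset_sum _ fun j _ => (hcentryψ i j).pow 2
  have hcG : ContinuousOn G Ω := by
    refine ContinuousOn.div ?_ (hcφ.pow 3) fun x hx => pow_ne_zero _ (hcφne x hx)
    exact ((continuousOn_finset_sum _ fun i _ => (hcgrad i).pow 2)).pow 2
  -- integrability
  have hFbd : ∀ x ∈ Ω, ‖F x‖ ≤ ((n : ℝ) ^ 2 * D1 ^ 2) / δ := by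
    intro x hx
    have h0 : 0 ≤ F x := div_nonneg (hsumφnn x) (hposΩ x hx).le
    rw [Real.norm_of_nonneg h0]
    exact div_le_div₀ (by positivity) (hsumφ x hx) hδ (hδle x hx)
  have hJbd : ∀ x ∈ Ω, ‖J x‖ ≤ M * ((n : ℝ) ^ 2 * D2 ^ 2) := by
    intro x hx
    have h0 : 0 ≤ J x := mul_nonneg (hposΩ x hx).le (hsumψnn x)
    rw [Real.norm_of_nonneg h0]
    exact mul_le_mul (hMle x hx) (hsumψ x hx) (hsumψnn x) hMpos.le
  have hGbd : ∀ x ∈ Ω, ‖G x‖ ≤ ((n : ℝ) * D1 ^ 2) ^ 2 / δ ^ 3 := by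
    intro x hx
    have h0 : 0 ≤ G x := div_nonneg (sq_nonneg _) (pow_nonneg (hposΩ x hx).le 3)
    rw [Real.norm_of_nonneg h0]
    refine div_le_div₀ (by positivity) ?_ (by positivity) ?_
    · rw [← sq_abs, abs_of_nonneg (hsumgnn x)]
      exact pow_le_pow_left₀ (hsumgnn x) (hsumgrad x hx) 2
    · exact pow_le_pow_left₀ hδ.le (hδle x hx) 3
  have hFint : IntegrableOn F Ω := by
    refine ⟨hcF.aestronglyMeasurable hmeas,
      HasFiniteIntegral.restrict_of_bounded (C := ((n : ℝ) ^ 2 * D1 ^ 2) / δ) hfin ?_⟩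
    exact (ae_restrict_iff' hmeas).mpr (ae_of_all _ hFbd)
  have hJint : IntegrableOn J Ω := by
    refine ⟨hcJ.aestronglyMeasurable hmeas,
      HasFiniteIntegral.restrict_of_bounded (C := M * ((n : ℝ) ^ 2 * D2 ^ 2)) hfin ?_⟩
    exact (ae_restrict_iff' hmeas).mpr (ae_of_all _ hJbd)
  have hGint : IntegrableOn G Ω := by
    refine ⟨hcG.aestronglyMeasurable hmeas,
      HasFiniteIntegral.restrict_of_bounded (C := ((n : ℝ) * D1 ^ 2) ^ 2 / δ ^ 3) hfin ?_⟩
    exact (ae_restrict_iff' hmeas).mpr (ae_of_all _ hGbd)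
  -- pointwise key inequality
  have hkey : ∀ x ∈ Ω, F x ≤ 2 * J x + 2 * G x := by
    intro x hx
    have ht : 0 < φ x := hposΩ x hx
    have hlog : ∀ i j : Fin n, iteratedFDeriv ℝ 2 ψ x ![e i, e j] =
        (φ x)⁻¹ * (iteratedFDeriv ℝ 2 φ x ![e i, e j]) -
          (φ x ^ 2)⁻¹ * (fderiv ℝ φ x (e i) * fderiv ℝ φ x (e j)) := fun i j =>
      log_second_deriv hΩopen (hφC2.mono hsubc) hposΩ hx (e i) (e j)
    have hFx : F x = ∑ i : Fin n, ∑ j : Fin n,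
        (iteratedFDeriv ℝ 2 φ x ![e i, e j]) ^ 2 / φ x := by
      rw [hF]
      simp [Finset.sum_div]
    have hJx : J x = ∑ i : Fin n, ∑ j : Fin n,
        φ x * (((φ x)⁻¹ * (iteratedFDeriv ℝ 2 φ x ![e i, e j]) -
          (φ x ^ 2)⁻¹ * (fderiv ℝ φ x (e i) * fderiv ℝ φ x (e j))) ^ 2) := by
      rw [hJ]
      simp only [Finset.mul_sum]
      exact Finset.sum_congr rfl fun i _ => Finset.sum_congr rfl fun j _ => by rw [hlog i j]
    have hGx : G x = ∑ i : Fin n, ∑ j : Fin n,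
        (fderiv ℝ φ x (e i) * fderiv ℝ φ x (e j)) ^ 2 / φ x ^ 3 := by
      have hsq2 : (∑ i : Fin n, (fderiv ℝ φ x (e i)) ^ 2) ^ 2
          = ∑ i : Fin n, ∑ j : Fin n, (fderiv ℝ φ x (e i) * fderiv ℝ φ x (e j)) ^ 2 := by
        rw [pow_two, Finset.sum_mul_sum]
        exact Finset.sum_congr rfl fun i _ => Finset.sum_congr rfl fun j _ => by ring
      simp only [hG]
      rw [hsq2, Finset.sum_div]
      exact Finset.sum_congr rfl fun i _ => by rw [Finset.sum_div]
    rw [hFx, hJx, hGx, Finset.mul_sum, Finset.mul_sum]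
    simp only [Finset.mul_sum]
    rw [← Finset.sum_add_distrib]
    refine Finset.sum_le_sum fun i _ => ?_
    rw [← Finset.sum_add_distrib]
    refine Finset.sum_le_sum fun j _ => ?_
    exact entry_ineq ht
  -- integrate
  have hmono : ∫ x in Ω, F x ≤ ∫ x in Ω, (2 * J x + 2 * G x) :=
    setIntegral_mono_on hFint ((hJint.const_mul 2).add (hGint.const_mul 2)) hmeas hkey
  have hsplit : ∫ x in Ω, (2 * J x + 2 * G x)
      = 2 * (∫ x in Ω, J x) + 2 * (∫ x in Ω, G x) := by
    rw [integral_add (hJint.const_mul 2) (hGint.const_mul 2),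
      integral_const_mul, integral_const_mul]
  have hmono2 : integral (volume.restrict Ω) F
      ≤ 2 * integral (volume.restrict Ω) J + 2 * integral (volume.restrict Ω) G :=
    hmono.trans_eq hsplit
  have hsq : Real.sqrt n ^ 2 = (n : ℝ) := Real.sq_sqrt (Nat.cast_nonneg n)
  have hexp : ((2 : ℝ) + Real.sqrt n) ^ 2 = (n : ℝ) + 4 * Real.sqrt n + 4 := by
    nlinarith [hsq]
  have hyp' : integral (volume.restrict Ω) G
      ≤ ((n : ℝ) + 4 * Real.sqrt n + 4) * integral (volume.restrict Ω) J := by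
    rw [← hexp]; exact hyp
  have heq : 2 * integral (volume.restrict Ω) J
      + 2 * (((n : ℝ) + 4 * Real.sqrt n + 4) * integral (volume.restrict Ω) J)
      = (2 * (n : ℝ) + 8 * Real.sqrt n + 10) * integral (volume.restrict Ω) J := by ring
  show integral (volume.restrict Ω) F
      ≤ (2 * (n : ℝ) + 8 * Real.sqrt n + 10) * integral (volume.restrict Ω) J
  linarith [hmono2, hyp', heq]
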